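/- Let p be a polynomial in the Smith–Kidger Type 2 space P₂ ⊕ span{x₁x₂x₃, x₁x₂², x₂x₃², x₃x₁²}. If p vanishes at the four points (1,±1,±1) and at (1,0,0), then the integral of p(1,x₂,x₃) over [−1,1]² equals zero. -/

import Mathlib

open MvPolynomial

noncomputable def SK2 : Submodule ℝ (MvPolynomial (Fin 3) ℝ) :=
  MvPolynomial.restrictTotalDegree (Fin 3) ℝ 2 ⊔
    Submodule.span ℝ {X 0 * X 1 * X 2, X 0 * X 1 ^ 2, X 1 * X 2 ^ 2, X 2 * X 0 ^ 2}

lemma sk2_contF (p : MvPolynomial (Fin 3) ℝ) :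
    Continuous (fun yz : ℝ × ℝ => eval ![1, yz.1, yz.2] p) := by
  apply (MvPolynomial.continuous_eval p).comp
  apply continuous_pi
  intro i
  fin_cases i <;> simp <;> fun_prop

lemma sk2_inner_intble (p : MvPolynomial (Fin 3) ℝ) (y : ℝ) :
    IntervalIntegrable (fun z => eval ![1, y, z] p) MeasureTheory.volume (-1) 1 := by
  exact ((sk2_contF p).comp (by fun_prop : Continuous fun z : ℝ => ((y, z) : ℝ × ℝ))).intervalIntegrable _ _

lemma sk2_outer_cont (p : MvPolynomial (Fin 3) ℝ) :
    Continuous fun y : ℝ => ∫ z in (-1:ℝ)..1, eval ![1, y, z] p := by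
  exact intervalIntegral.continuous_parametric_intervalIntegral_of_continuous'
    (f := fun y z => eval ![1, y, z] p) (sk2_contF p) _ _

noncomputable def sk2L : MvPolynomial (Fin 3) ℝ →ₗ[ℝ] ℝ where
  toFun p := (∫ y in (-1:ℝ)..1, ∫ z in (-1:ℝ)..1, eval ![1, y, z] p) -
    ((eval ![1, 1, 1] p + eval ![1, 1, -1] p + eval ![1, -1, 1] p + eval ![1, -1, -1] p) / 3
      + (8 / 3) * eval ![1, 0, 0] p)
  map_add' p q := by
    have hin : ∀ y : ℝ, (∫ z in (-1:ℝ)..1, eval ![1, y, z] p + eval ![1, y, z] q)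
        = (∫ z in (-1:ℝ)..1, eval ![1, y, z] p) + ∫ z in (-1:ℝ)..1, eval ![1, y, z] q :=
      fun y => intervalIntegral.integral_add (sk2_inner_intble p y) (sk2_inner_intble q y)
    simp only [map_add, hin]
    rw [intervalIntegral.integral_add ((sk2_outer_cont p).intervalIntegrable _ _)
      ((sk2_outer_cont q).intervalIntegrable _ _)]
    ring
  map_smul' c p := by
    simp only [smul_eq_C_mul, map_mul, eval_C, intervalIntegral.integral_const_mul,
      RingHom.id_apply, smul_eq_mul]
    ring

lemma sk2_intI (c : ℝ) (a b : ℕ) :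
    (∫ y in (-1:ℝ)..1, ∫ z in (-1:ℝ)..1, c * (y ^ a * z ^ b))
      = c * (((1:ℝ) ^ (a+1) - (-1:ℝ) ^ (a+1)) / (a+1)) *
          (((1:ℝ) ^ (b+1) - (-1:ℝ) ^ (b+1)) / (b+1)) := by
  have h1 : ∀ y : ℝ, (∫ z in (-1:ℝ)..1, c * (y ^ a * z ^ b))
      = (c * y ^ a) * (((1:ℝ) ^ (b+1) - (-1:ℝ) ^ (b+1)) / (b+1)) := by
    intro y
    rw [show (fun z : ℝ => c * (y ^ a * z ^ b)) = fun z : ℝ => (c * y ^ a) * z ^ b from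
      funext fun z => by ring]
    rw [intervalIntegral.integral_const_mul, integral_pow]
  simp_rw [h1]
  rw [intervalIntegral.integral_mul_const, intervalIntegral.integral_const_mul, integral_pow]

lemma sk2_mono (v : Fin 3 →₀ ℕ) (c : ℝ) (ha : v 1 ≤ 2) (hb : v 2 ≤ 2)
    (hab : ¬(v 1 = 2 ∧ v 2 = 2)) : monomial v c ∈ LinearMap.ker sk2L := by
  rw [LinearMap.mem_ker]
  show (∫ y in (-1:ℝ)..1, ∫ z in (-1:ℝ)..1, eval ![1, y, z] (monomial v c)) - _ = 0
  simp only [eval_monomial, Finsupp.prod_pow, Fin.prod_univ_three, Matrix.cons_val_zero,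
    Matrix.cons_val_one, Matrix.head_cons, Matrix.cons_val_two, Matrix.tail_cons, one_pow, one_mul]
  rw [sk2_intI]
  set a := v 1 with haa
  set b := v 2 with hbb
  clear_value a b
  interval_cases a <;> interval_cases b <;> revert hab <;> norm_num <;> ring_nf

lemma sk2_ker : SK2 ≤ LinearMap.ker sk2L := by
  rw [SK2, sup_le_iff]
  constructor
  · intro p hp
    rw [mem_restrictTotalDegree] at hp
    rw [p.as_sum]
    apply Submodule.sum_mem
    intro v hv
    have := MvPolynomial.le_totalDegree hv
    have h3 : v.sum (fun _ e => e) = v 0 + v 1 + v 2 := by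
      rw [Finsupp.sum_fintype] <;> simp [Fin.sum_univ_three]
    apply sk2_mono <;> omega
  · rw [Submodule.span_le]
    intro x hx
    simp only [Set.mem_insert_iff, Set.mem_singleton_iff] at hx
    have e1 : (X 0 * X 1 * X 2 : MvPolynomial (Fin 3) ℝ)
        = monomial (Finsupp.single 0 1 + Finsupp.single 1 1 + Finsupp.single 2 1) 1 := by
      simp [MvPolynomial.X, monomial_mul]
    have e2 : (X 0 * X 1 ^ 2 : MvPolynomial (Fin 3) ℝ)
        = monomial (Finsupp.single 0 1 + Finsupp.single 1 2) 1 := by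
      rw [MvPolynomial.X_pow_eq_monomial]; simp [MvPolynomial.X, monomial_mul]
    have e3 : (X 1 * X 2 ^ 2 : MvPolynomial (Fin 3) ℝ)
        = monomial (Finsupp.single 1 1 + Finsupp.single 2 2) 1 := by
      rw [MvPolynomial.X_pow_eq_monomial]; simp [MvPolynomial.X, monomial_mul]
    have e4 : (X 2 * X 0 ^ 2 : MvPolynomial (Fin 3) ℝ)
        = monomial (Finsupp.single 2 1 + Finsupp.single 0 2) 1 := by
      rw [MvPolynomial.X_pow_eq_monomial]; simp [MvPolynomial.X, monomial_mul]
    rcases hx with rfl | rfl | rfl | rfl <;>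
      [rw [e1]; rw [e2]; rw [e3]; rw [e4]] <;>
      · apply sk2_mono <;> simp [Finsupp.single_apply]

theorem stmt5 (p : MvPolynomial (Fin 3) ℝ) (hp : p ∈ SK2)
    (h1 : eval ![1, 1, 1] p = 0) (h2 : eval ![1, 1, -1] p = 0)
    (h3 : eval ![1, -1, 1] p = 0) (h4 : eval ![1, -1, -1] p = 0)
    (h5 : eval ![1, 0, 0] p = 0) :
    (∫ y in (-1 : ℝ)..1, ∫ z in (-1 : ℝ)..1, eval ![1, y, z] p) = 0 := by
  have := sk2_ker hp
  rw [LinearMap.mem_ker] at this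
  have h : sk2L p = (∫ y in (-1:ℝ)..1, ∫ z in (-1:ℝ)..1, eval ![1, y, z] p) -
    ((eval ![1, 1, 1] p + eval ![1, 1, -1] p + eval ![1, -1, 1] p + eval ![1, -1, -1] p) / 3
      + (8 / 3) * eval ![1, 0, 0] p) := rfl
  rw [h, h1, h2, h3, h4, h5] at this
  linarith
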